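/- Let X = (x_1,...,x_n) with n ≥ 3 be positive integers. Then the GCD matrix S(X) is TN_2 (all minors of size at most 2 nonnegative) if and only if S(X) is totally nonnegative (all minors nonnegative). -/

import Mathlib

/-- A real matrix is totally nonnegative if every square minor is nonnegative. -/
def TotallyNonneg {n : ℕ} (A : Matrix (Fin n) (Fin n) ℝ) : Prop :=
  ∀ (k : ℕ) (r c : Fin k → Fin n), StrictMono r → StrictMono c →
    0 ≤ (A.submatrix r c).det

/-- All minors of size at most 2 are nonnegative. -/
def TN2 {n : ℕ} (A : Matrix (Fin n) (Fin n) ℝ) : Prop :=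
  ∀ (k : ℕ), k ≤ 2 → ∀ (r c : Fin k → Fin n), StrictMono r → StrictMono c →
    0 ≤ (A.submatrix r c).det

/-- Key arithmetic divisibility: `gcd(a,b)·gcd(a,c) ∣ a·gcd(b,c)`. -/
lemma gcd_dvd_aux (a b c : ℕ) (ha : a ≠ 0) (hb : b ≠ 0) (hc : c ≠ 0) :
    Nat.gcd a b * Nat.gcd a c ∣ a * Nat.gcd b c := by
  have hab : Nat.gcd a b ≠ 0 := fun h => ha (Nat.eq_zero_of_gcd_eq_zero_left h)
  have hac : Nat.gcd a c ≠ 0 := fun h => ha (Nat.eq_zero_of_gcd_eq_zero_left h)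
  have hbc : Nat.gcd b c ≠ 0 := fun h => hb (Nat.eq_zero_of_gcd_eq_zero_left h)
  rw [← Nat.factorization_le_iff_dvd (Nat.mul_ne_zero hab hac) (Nat.mul_ne_zero ha hbc)]
  rw [Nat.factorization_mul hab hac, Nat.factorization_mul ha hbc,
    Nat.factorization_gcd ha hb, Nat.factorization_gcd ha hc, Nat.factorization_gcd hb hc]
  rw [Finsupp.le_def]
  intro p
  simp only [Finsupp.add_apply, Finsupp.inf_apply]
  omega

lemma strictMono_pair {n : ℕ} {a b : Fin n} (h : a < b) : StrictMono ![a, b] := by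
  intro i j hij
  fin_cases i <;> fin_cases j <;> simp_all

/-- Minors of a "Green's kernel" matrix `f(min)·g(max)` with positive `g` and
nondecreasing ratio `f/g` are nonnegative. -/
lemma green_det_nonneg {n : ℕ} :
    ∀ (k : ℕ) (f g : Fin n → ℝ), (∀ i, 0 < g i) →
      (∀ i j : Fin n, i ≤ j → f i * g j ≤ f j * g i) →
      ∀ (u v : Fin k → Fin n), StrictMono u → StrictMono v →
        (∀ a, 0 ≤ f (min (u a) (v a))) →
        0 ≤ (Matrix.of fun a b : Fin k => f (min (u a) (v b)) * g (max (u a) (v b))).det := by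
  intro k
  induction k with
  | zero =>
    intro f g _ _ u v _ _ _
    simp [Matrix.det_fin_zero]
  | succ k ih =>
    suffices H : ∀ (f g : Fin n → ℝ), (∀ i, 0 < g i) →
        (∀ i j : Fin n, i ≤ j → f i * g j ≤ f j * g i) →
        ∀ (u v : Fin (k+1) → Fin n), StrictMono u → StrictMono v →
          (∀ a, 0 ≤ f (min (u a) (v a))) → u 0 ≤ v 0 →
          0 ≤ (Matrix.of fun a b : Fin (k+1) =>
                f (min (u a) (v b)) * g (max (u a) (v b))).det by
      intro f g hg hr u v hu hv hf
      rcases le_total (u 0) (v 0) with h0 | h0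
      · exact H f g hg hr u v hu hv hf h0
      · have key := H f g hg hr v u hv hu (fun a => by rw [min_comm]; exact hf a) h0
        have hT : (Matrix.of fun a b : Fin (k+1) =>
            f (min (u a) (v b)) * g (max (u a) (v b))).det =
            (Matrix.of fun a b : Fin (k+1) =>
            f (min (v a) (u b)) * g (max (v a) (u b))).det := by
          rw [← Matrix.det_transpose (Matrix.of fun a b : Fin (k+1) =>
            f (min (v a) (u b)) * g (max (v a) (u b)))]
          congr 1
          ext a b
          simp only [Matrix.transpose_apply, Matrix.of_apply]
          rw [min_comm, max_comm]
        rw [hT]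
        exact key
    intro f g hg hr u v hu hv hf h0
    set M : Matrix (Fin (k+1)) (Fin (k+1)) ℝ :=
      Matrix.of fun a b => f (min (u a) (v b)) * g (max (u a) (v b)) with hM
    have hrow : ∀ (a b : Fin (k+1)), u a ≤ v 0 → M a b = f (u a) * g (v b) := by
      intro a b hab
      have h1 : u a ≤ v b := hab.trans (hv.monotone (Fin.zero_le b))
      simp only [hM, Matrix.of_apply, min_eq_left h1, max_eq_right h1]
    by_cases hf0 : f (u 0) = 0
    · refine le_of_eq (Matrix.det_eq_zero_of_row_eq_zero 0 fun b => ?_).symm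
      rw [hrow 0 b h0, hf0, zero_mul]
    by_cases hex : ∃ a : Fin (k+1), a ≠ 0 ∧ u a ≤ v 0
    · obtain ⟨a, ha0, hav⟩ := hex
      have hMa : M a = (f (u a) / f (u 0)) • M 0 := by
        ext b
        rw [Pi.smul_apply, hrow a b hav, hrow 0 b h0, smul_eq_mul]
        field_simp
      have h1 : M = M.updateRow a ((f (u a) / f (u 0)) • M 0) := by
        rw [← hMa, Matrix.updateRow_eq_self]
      rw [h1, Matrix.det_updateRow_smul]
      have h2 : (M.updateRow a (M 0)).det = 0 := by
        apply Matrix.det_zero_of_row_eq (Ne.symm ha0)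
        rw [Matrix.updateRow_ne (Ne.symm ha0), Matrix.updateRow_self]
      rw [h2, mul_zero]
    · push_neg at hex
      have hne : ∀ a : Fin (k+1), a ≠ 0 → v 0 < u a := hex
      have hgv0 : g (v 0) ≠ 0 := (hg (v 0)).ne'
      set c : Fin (k+1) → ℝ := fun b => if b = 0 then 0 else g (v b) / g (v 0) with hc
      set E : Matrix (Fin (k+1)) (Fin (k+1)) ℝ :=
        Matrix.of fun m b => (if m = b then (1:ℝ) else 0) + (if m = 0 then -(c b) else 0)
        with hE
      have hEtri : E.BlockTriangular id := by
        intro i j hij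
        have h1 : i ≠ j := ne_of_gt hij
        simp only [id] at hij
        have h2 : i ≠ 0 := Fin.pos_iff_ne_zero.mp (lt_of_le_of_lt (Fin.zero_le j) hij)
        simp [hE, h1, h2]
      have hEdet : E.det = 1 := by
        rw [Matrix.det_of_upperTriangular hEtri]
        apply Finset.prod_eq_one
        intro i _
        by_cases hi : i = 0
        · simp [hE, hi, hc]
        · simp [hE, hi]
      have hAE : ∀ a b, (M * E) a b = M a b - c b * M a 0 := by
        intro a b
        rw [Matrix.mul_apply]
        have hterm : ∀ m : Fin (k+1), M a m * E m b =
            (if m = b then M a b else 0) + (if m = 0 then -(c b * M a 0) else 0) := by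
          intro m
          simp only [hE, Matrix.of_apply, hc]
          by_cases h1 : m = b <;> by_cases h2 : m = 0 <;> by_cases h3 : b = 0 <;>
            simp_all <;> ring
        rw [Finset.sum_congr rfl fun m _ => hterm m, Finset.sum_add_distrib,
          Finset.sum_ite_eq' Finset.univ b, Finset.sum_ite_eq' Finset.univ 0]
        simp [sub_eq_add_neg]
      have hdet : M.det = (M * E).det := by rw [Matrix.det_mul, hEdet, mul_one]
      have hA00 : (M * E) 0 0 = f (u 0) * g (v 0) := by
        rw [hAE, hc]
        simp [hrow 0 0 h0]
      have hA0 : ∀ b : Fin (k+1), b ≠ 0 → (M * E) 0 b = 0 := by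
        intro b hb
        rw [hAE, hrow 0 b h0, hrow 0 0 h0, hc]
        simp only [if_neg hb]
        field_simp
        ring
      set f' : Fin n → ℝ := fun t => f t - f (v 0) / g (v 0) * g t with hf'
      have hsub : (M * E).submatrix Fin.succ Fin.succ =
          Matrix.of fun a b : Fin k =>
            f' (min (u (Fin.succ a)) (v (Fin.succ b))) *
              g (max (u (Fin.succ a)) (v (Fin.succ b))) := by
        ext a b
        rw [Matrix.submatrix_apply, hAE]
        have hv0a : v 0 ≤ u (Fin.succ a) := (hne _ (Fin.succ_ne_zero a)).le
        have hMa0 : M (Fin.succ a) 0 = f (v 0) * g (u (Fin.succ a)) := by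
          simp only [hM, Matrix.of_apply, min_eq_right hv0a, max_eq_left hv0a]
        have hcb : c (Fin.succ b) = g (v (Fin.succ b)) / g (v 0) := by
          rw [hc]; simp [Fin.succ_ne_zero b]
        rw [hMa0, hcb]
        simp only [hM, Matrix.of_apply, hf']
        rcases le_total (u (Fin.succ a)) (v (Fin.succ b)) with h | h
        · rw [min_eq_left h, max_eq_right h]
          field_simp
        · rw [min_eq_right h, max_eq_left h]
          field_simp
      have hr' : ∀ i j : Fin n, i ≤ j → f' i * g j ≤ f' j * g i := by
        intro i j hij
        have h1 := hr i j hij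
        simp only [hf']
        have : f i * g j - f (v 0) / g (v 0) * g i * g j ≤
            f j * g i - f (v 0) / g (v 0) * (g j * g i) := by
          rw [mul_assoc]
          linarith
        calc (f i - f (v 0) / g (v 0) * g i) * g j
            = f i * g j - f (v 0) / g (v 0) * g i * g j := by ring
          _ ≤ f j * g i - f (v 0) / g (v 0) * (g j * g i) := this
          _ = (f j - f (v 0) / g (v 0) * g j) * g i := by ring
      have hf'' : ∀ a : Fin k, 0 ≤ f' (min (u (Fin.succ a)) (v (Fin.succ a))) := by
        intro a
        set m := min (u (Fin.succ a)) (v (Fin.succ a)) with hm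
        have hv0m : v 0 ≤ m :=
          le_min (hne _ (Fin.succ_ne_zero a)).le (hv.monotone (Fin.zero_le _))
        have h1 := hr (v 0) m hv0m
        simp only [hf']
        rw [sub_nonneg, div_mul_eq_mul_div, div_le_iff₀ (hg (v 0))]
        linarith
      have hdet2 : 0 ≤ ((M * E).submatrix Fin.succ Fin.succ).det := by
        rw [hsub]
        exact ih f' g hg hr' (u ∘ Fin.succ) (v ∘ Fin.succ)
          (hu.comp Fin.strictMono_succ) (hv.comp Fin.strictMono_succ) hf''
      rw [hdet, Matrix.det_succ_row_zero]
      rw [Finset.sum_eq_single 0]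
      · rw [hA00]
        simp only [Fin.val_zero, pow_zero, one_mul, Fin.succAbove_zero]
        have hfu0 : 0 ≤ f (u 0) := by
          have := hf 0
          rwa [min_eq_left h0] at this
        exact mul_nonneg (mul_nonneg hfu0 (hg (v 0)).le) hdet2
      · intro b _ hb
        rw [hA0 b hb]
        ring
      · intro h
        exact absurd (Finset.mem_univ 0) h

theorem gcd_matrix_TN2_iff_TN (n : ℕ) (hn : 3 ≤ n) (x : Fin n → ℕ) (hx : ∀ i, 0 < x i)
    (S : Matrix (Fin n) (Fin n) ℝ)
    (hS : ∀ i j, S i j = (Nat.gcd (x i) (x j) : ℝ)) :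
    TN2 S ↔ TotallyNonneg S := by
  constructor
  · intro h2
    set N : Fin n := ⟨n - 1, by omega⟩ with hN
    have hleN : ∀ i : Fin n, i ≤ N := by
      intro i
      rw [Fin.le_def]
      simp only [hN]
      omega
    have hxne : ∀ i : Fin n, x i ≠ 0 := fun i => (hx i).ne'
    have hgcdpos : ∀ i j : Fin n, 0 < Nat.gcd (x i) (x j) :=
      fun i j => Nat.gcd_pos_of_pos_right _ (hx j)
    -- key multiplicative identity forced by TN2
    have key : ∀ i j : Fin n, i ≤ j →
        Nat.gcd (x i) (x j) * Nat.gcd (x j) (x N) = Nat.gcd (x i) (x N) * x j := by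
      intro i j hij
      rcases eq_or_lt_of_le hij with rfl | hij'
      · rw [Nat.gcd_self]
        exact mul_comm _ _
      rcases eq_or_lt_of_le (hleN j) with hjN | hjN
      · subst hjN
        rw [Nat.gcd_self]
      · apply Nat.le_antisymm
        · apply Nat.le_of_dvd (Nat.mul_pos (hgcdpos i N) (hx j))
          have := gcd_dvd_aux (x j) (x i) (x N) (hxne j) (hxne i) (hxne N)
          rw [Nat.gcd_comm (x j) (x i)] at this
          calc Nat.gcd (x i) (x j) * Nat.gcd (x j) (x N)
              ∣ x j * Nat.gcd (x i) (x N) := this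
            _ = Nat.gcd (x i) (x N) * x j := mul_comm _ _
        · have h2' := h2 2 le_rfl ![i, j] ![j, N] (strictMono_pair hij') (strictMono_pair hjN)
          rw [Matrix.det_fin_two] at h2'
          simp only [Matrix.submatrix_apply, Matrix.cons_val_zero, Matrix.cons_val_one,
            Matrix.head_cons, hS, Nat.gcd_self] at h2'
          rw [sub_nonneg] at h2'
          have : (Nat.gcd (x i) (x N) * x j : ℝ) ≤
              (Nat.gcd (x i) (x j) * Nat.gcd (x j) (x N) : ℝ) := by push_cast; linarith
          exact_mod_cast this
    set f : Fin n → ℝ := fun i => (Nat.gcd (x i) (x N) : ℝ) with hf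
    set g : Fin n → ℝ := fun i => (x i : ℝ) / (Nat.gcd (x i) (x N) : ℝ) with hg
    have hgpos : ∀ i, 0 < g i := by
      intro i
      exact div_pos (by exact_mod_cast hx i) (by exact_mod_cast hgcdpos i N)
    have hSfg : ∀ i j : Fin n, i ≤ j → S i j = f i * g j := by
      intro i j hij
      have hk : (Nat.gcd (x i) (x j) : ℝ) * (Nat.gcd (x j) (x N) : ℝ)
          = (Nat.gcd (x i) (x N) : ℝ) * (x j : ℝ) := by
        exact_mod_cast congrArg (Nat.cast : ℕ → ℝ) (key i j hij)
      have hne' : (Nat.gcd (x j) (x N) : ℝ) ≠ 0 := by exact_mod_cast (hgcdpos j N).ne'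
      rw [hS]
      simp only [hf, hg]
      rw [mul_div_assoc', eq_div_iff hne']
      linear_combination hk
    have hr : ∀ i j : Fin n, i ≤ j → f i * g j ≤ f j * g i := by
      intro i j hij
      rw [← hSfg i j hij, hS]
      have hd : Nat.gcd (x i) (x j) * Nat.gcd (x i) (x N) ≤ x i * Nat.gcd (x j) (x N) :=
        Nat.le_of_dvd (Nat.mul_pos (hx i) (hgcdpos j N))
          (gcd_dvd_aux (x i) (x j) (x N) (hxne i) (hxne j) (hxne N))
      simp only [hf, hg]
      rw [mul_div_assoc', le_div_iff₀ (by exact_mod_cast hgcdpos i N)]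
      have hd' := hd.trans_eq (Nat.mul_comm _ _)
      exact_mod_cast hd'
    intro k r c hrm hcm
    have hrewrite : S.submatrix r c =
        Matrix.of fun a b : Fin k => f (min (r a) (c b)) * g (max (r a) (c b)) := by
      ext a b
      rw [Matrix.submatrix_apply, Matrix.of_apply]
      rcases le_total (r a) (c b) with h | h
      · rw [min_eq_left h, max_eq_right h]
        exact hSfg _ _ h
      · rw [min_eq_right h, max_eq_left h, ← hSfg _ _ h, hS, hS, Nat.gcd_comm]
    rw [hrewrite]
    exact green_det_nonneg k f g hgpos hr r c hrm hcm
      (fun a => by simp only [hf]; positivity)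
  · intro hTN k _ r c h1 h2
    exact hTN k r c h1 h2
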